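/- arXiv:2012.06076 — 2 statements merged into one kernel-verified Lean document; each statement's English description precedes it below -/
import Mathlib

section
/- Let x_1, ..., x_T ∈ ℝ^d with ‖x_t‖² ≤ κ², A_1 = I_d, A_{t+1} = A_t + x_t x_t^T. Then Σ_{t=1}^T min(x_t^T A_t^{-1} x_t, 1) ≤ 2 d ln(1 + Tκ²/d). -/
open Matrix Finset

lemma aux_min_le_two_log {u : ℝ} (hu : 0 ≤ u) : min u 1 ≤ 2 * Real.log (1 + u) := by
  have hlog2 : (1:ℝ)/2 ≤ Real.log 2 := by
    rw [Real.le_log_iff_exp_le (by norm_num)]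
    have h1 := Real.exp_one_lt_d9
    have h2 : Real.exp (1/2) * Real.exp (1/2) = Real.exp 1 := by
      rw [← Real.exp_add]; norm_num
    nlinarith [Real.exp_pos (1/2 : ℝ)]
  rcases le_total u 1 with h | h
  · have hconc := strictConcaveOn_log_Ioi.concaveOn
    have hj := hconc.2 (Set.mem_Ioi.2 one_pos) (Set.mem_Ioi.2 (by norm_num : (0:ℝ) < 2))
      (by linarith : (0:ℝ) ≤ 1 - u) hu (by ring)
    simp only [smul_eq_mul, mul_one, Real.log_one, mul_zero, zero_add] at hj
    have h1u : 1 - u + u * 2 = 1 + u := by ring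
    rw [h1u] at hj
    have : min u 1 = u := min_eq_left h
    nlinarith
  · have hl : Real.log 2 ≤ Real.log (1 + u) := by
      apply Real.log_le_log (by norm_num)
      linarith
    have : min u 1 = 1 := min_eq_right h
    linarith

lemma aux_posSemidef_vecMulVec {d : ℕ} (v : Fin d → ℝ) :
    (Matrix.vecMulVec v v).PosSemidef := by
  have h := Matrix.posSemidef_conjTranspose_mul_self (Matrix.replicateRow Unit v)
  have he : (Matrix.replicateRow Unit v)ᴴ * Matrix.replicateRow Unit v = Matrix.vecMulVec v v := by
    rw [Matrix.vecMulVec_eq Unit]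
    congr 1
  rwa [he] at h

lemma aux_det_step {d : ℕ} (B : Matrix (Fin d) (Fin d) ℝ) (hB : B.PosDef) (v : Fin d → ℝ) :
    (B + Matrix.vecMulVec v v).det = B.det * (1 + v ⬝ᵥ (B⁻¹ *ᵥ v)) := by
  have hU : IsUnit B.det := hB.det_pos.ne'.isUnit
  rw [Matrix.vecMulVec_eq Unit, Matrix.det_add_replicateCol_mul_replicateRow hU]
  congr 1
  have hc : Matrix.replicateRow Unit v * B⁻¹ * Matrix.replicateCol Unit v
      = Matrix.replicateRow Unit v * Matrix.replicateCol Unit (B⁻¹ *ᵥ v) := by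
    rw [Matrix.replicateCol_mulVec, Matrix.mul_assoc]
  rw [hc, Matrix.det_unique]
  simp [Matrix.replicateRow_mul_replicateCol_apply]

lemma aux_trace_eq_sum_eigenvalues {d : ℕ} (B : Matrix (Fin d) (Fin d) ℝ)
    (hH : B.IsHermitian) : B.trace = ∑ i, hH.eigenvalues i := by
  conv_lhs => rw [hH.spectral_theorem]
  rw [Unitary.conjStarAlgAut_apply, Matrix.trace_mul_cycle, Unitary.coe_star_mul_self, Matrix.one_mul,
    Matrix.trace_diagonal]
  simp

lemma aux_det_le_pow {d : ℕ} (hd : 0 < d) (B : Matrix (Fin d) (Fin d) ℝ)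
    (hB : B.PosDef) : B.det ≤ (B.trace / d) ^ d := by
  have hH := hB.isHermitian
  have hnn : ∀ i, 0 ≤ hH.eigenvalues i := hB.posSemidef.eigenvalues_nonneg
  have hd' : (0:ℝ) < d := by exact_mod_cast hd
  have hw : ∑ _i : Fin d, (1:ℝ)/d = 1 := by
    simp [Finset.sum_const]
    field_simp
  have h := Real.geom_mean_le_arith_mean_weighted Finset.univ (fun _ => (1:ℝ)/d)
    hH.eigenvalues (fun i _ => by positivity) hw (fun i _ => hnn i)
  rw [← Finset.mul_sum] at h
  have htr : B.trace = ∑ i, hH.eigenvalues i := aux_trace_eq_sum_eigenvalues B hH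
  have hle : ∏ i, hH.eigenvalues i ^ ((1:ℝ)/d) ≤ B.trace / d := by
    rw [htr]
    calc ∏ i, hH.eigenvalues i ^ ((1:ℝ)/d) ≤ 1/(d:ℝ) * ∑ i, hH.eigenvalues i := h
    _ = (∑ i, hH.eigenvalues i) / d := by ring
  have hprodpow : (∏ i, hH.eigenvalues i ^ ((1:ℝ)/d)) ^ d = ∏ i, hH.eigenvalues i := by
    rw [← Finset.prod_pow]
    apply Finset.prod_congr rfl
    intro i _
    rw [← Real.rpow_natCast (hH.eigenvalues i ^ ((1:ℝ)/d)) d, ← Real.rpow_mul (hnn i),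
      one_div, inv_mul_cancel₀ (by exact_mod_cast hd.ne' : (d:ℝ) ≠ 0), Real.rpow_one]
  have hdet : B.det = ∏ i, hH.eigenvalues i := by
    simpa using hH.det_eq_prod_eigenvalues
  rw [hdet, ← hprodpow]
  exact pow_le_pow_left₀ (Finset.prod_nonneg fun i _ => Real.rpow_nonneg (hnn i) _) hle d

/-- Elliptical potential lemma: with `A_1 = I_d`, `A_{t+1} = A_t + x_t x_tᵀ` and
`‖x_t‖² ≤ κ²`, we have `Σ_{t=1}^T min(x_tᵀ A_t⁻¹ x_t, 1) ≤ 2 d ln(1 + Tκ²/d)`. -/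
theorem elliptical_potential (d T : ℕ) (hd : 0 < d) (κ : ℝ)
    (x : ℕ → Fin d → ℝ)
    (hx : ∀ t, 1 ≤ t → t ≤ T → ∑ i, (x t i) ^ 2 ≤ κ ^ 2)
    (A : ℕ → Matrix (Fin d) (Fin d) ℝ)
    (hA1 : A 1 = 1)
    (hA : ∀ t, A (t + 1) = A t + Matrix.vecMulVec (x t) (x t)) :
    ∑ t ∈ Finset.Icc 1 T, min (x t ⬝ᵥ ((A t)⁻¹ *ᵥ x t)) 1
      ≤ 2 * d * Real.log (1 + T * κ ^ 2 / d) := by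
  have hd' : (0:ℝ) < d := by exact_mod_cast hd
  set u : ℕ → ℝ := fun t => x t ⬝ᵥ ((A t)⁻¹ *ᵥ x t) with hu_def
  -- positive definiteness
  have hpos : ∀ n : ℕ, (A (n+1)).PosDef := by
    intro n
    induction n with
    | zero => rw [hA1]; exact Matrix.PosDef.one
    | succ n ih =>
      rw [hA (n+1)]
      exact ih.add_posSemidef (aux_posSemidef_vecMulVec _)
  have hpos' : ∀ t, 1 ≤ t → (A t).PosDef := by
    intro t ht
    obtain ⟨n, rfl⟩ := Nat.exists_eq_add_of_le ht
    rw [Nat.add_comm 1 n]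
    exact hpos n
  -- nonnegativity of u
  have hu_nonneg : ∀ t, 1 ≤ t → 0 ≤ u t := by
    intro t ht
    have h := ((hpos' t ht).inv).posSemidef.re_dotProduct_nonneg (x t)
    simpa using h
  -- determinant step
  have hdet : ∀ t, 1 ≤ t → (A (t+1)).det = (A t).det * (1 + u t) := by
    intro t ht
    rw [hA t]
    exact aux_det_step (A t) (hpos' t ht) (x t)
  -- log step
  have hlogstep : ∀ t, 1 ≤ t →
      Real.log (1 + u t) = Real.log (A (t+1)).det - Real.log (A t).det := by
    intro t ht
    rw [hdet t ht, Real.log_mul (hpos' t ht).det_pos.ne'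
      (by have := hu_nonneg t ht; linarith)]
    ring
  -- telescoping
  have hsum : ∑ t ∈ Finset.Icc 1 T, Real.log (1 + u t) = Real.log (A (T+1)).det := by
    have h1 : ∑ t ∈ Finset.Icc 1 T, Real.log (1 + u t)
        = ∑ t ∈ Finset.Icc 1 T, (Real.log (A (t+1)).det - Real.log (A t).det) :=
      Finset.sum_congr rfl fun t htm => hlogstep t (Finset.mem_Icc.1 htm).1
    rw [h1, ← Finset.Ico_add_one_right_eq_Icc, Finset.sum_Ico_eq_sum_range]
    simp only [Nat.add_sub_cancel_left, Nat.succ_sub_one, Nat.add_sub_cancel]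
    have h2 : ∀ i ∈ Finset.range T, Real.log (A (1 + i + 1)).det - Real.log (A (1 + i)).det
        = (fun k => Real.log (A (k+1)).det) (i+1) - (fun k => Real.log (A (k+1)).det) i := by
      intro i _
      simp [Nat.add_comm 1 i]
    rw [Finset.sum_congr rfl h2,
      Finset.sum_range_sub (fun k => Real.log (A (k+1)).det) T]
    simp [hA1]
  -- trace bound
  have htrace : ∀ n : ℕ, (A (n+1)).trace = d + ∑ t ∈ Finset.Icc 1 n, ∑ i, (x t i)^2 := by
    intro n
    induction n with
    | zero => simp [hA1, Matrix.trace_one]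
    | succ n ih =>
      rw [hA (n+1), Matrix.trace_add, ih, Finset.sum_Icc_succ_top (by omega : 1 ≤ n+1)]
      have hvv : (Matrix.vecMulVec (x (n+1)) (x (n+1))).trace = ∑ i, (x (n+1) i)^2 := by
        simp [Matrix.trace, Matrix.diag, Matrix.vecMulVec_apply, sq]
      rw [hvv]
      ring
  have hS0 : 0 ≤ ∑ t ∈ Finset.Icc 1 T, ∑ i, (x t i)^2 :=
    Finset.sum_nonneg fun t _ => Finset.sum_nonneg fun i _ => sq_nonneg _
  have hSκ : ∑ t ∈ Finset.Icc 1 T, ∑ i, (x t i)^2 ≤ T * κ^2 := by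
    calc ∑ t ∈ Finset.Icc 1 T, ∑ i, (x t i)^2 ≤ ∑ t ∈ Finset.Icc 1 T, κ^2 :=
      Finset.sum_le_sum fun t htm => hx t (Finset.mem_Icc.1 htm).1 (Finset.mem_Icc.1 htm).2
    _ = T * κ^2 := by
      rw [Finset.sum_const, Nat.card_Icc]
      simp [nsmul_eq_mul]
  have htr_le : (A (T+1)).trace ≤ d + T * κ^2 := by
    rw [htrace T]; linarith
  have htr_pos : (0:ℝ) < (A (T+1)).trace := by
    rw [htrace T]; linarith
  -- log det bound
  have hP := hpos T
  have hlogdet : Real.log (A (T+1)).det ≤ d * Real.log (1 + T * κ^2 / d) := by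
    have h1 : Real.log (A (T+1)).det ≤ Real.log (((A (T+1)).trace / d) ^ d) :=
      Real.log_le_log hP.det_pos (aux_det_le_pow hd (A (T+1)) hP)
    rw [Real.log_pow] at h1
    have h2 : Real.log ((A (T+1)).trace / d) ≤ Real.log (1 + T * κ^2 / d) := by
      apply Real.log_le_log (by positivity)
      rw [div_le_iff₀ hd']
      have hκ : (0:ℝ) ≤ T * κ^2 := by positivity
      calc (A (T+1)).trace ≤ d + T * κ^2 := htr_le
      _ = (1 + T * κ^2 / d) * d := by field_simp
    calc Real.log (A (T+1)).det ≤ d * Real.log ((A (T+1)).trace / d) := h1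
    _ ≤ d * Real.log (1 + T * κ^2 / d) := by
      exact mul_le_mul_of_nonneg_left h2 (by positivity)
  -- assemble
  calc ∑ t ∈ Finset.Icc 1 T, min (u t) 1
      ≤ ∑ t ∈ Finset.Icc 1 T, 2 * Real.log (1 + u t) :=
        Finset.sum_le_sum fun t htm => aux_min_le_two_log (hu_nonneg t (Finset.mem_Icc.1 htm).1)
    _ = 2 * Real.log (A (T+1)).det := by rw [← Finset.mul_sum, hsum]
    _ ≤ 2 * (d * Real.log (1 + T * κ^2 / d)) := by linarith
    _ = 2 * d * Real.log (1 + T * κ^2 / d) := by ring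
end

section
/- Let x_1, ..., x_T ∈ ℝ^d with ‖x_t‖² ≤ κ², A_t = I_d + Σ_{τ<t} x_τ x_τ^T. Then for each t, Σ_{τ=1}^{t-1} |x_t^T A_t^{-1} x_τ| ≤ sqrt(t · x_t^T A_t^{-1} x_t). -/
open Matrix Finset

lemma vecMulVec_mulVec' {d : ℕ} (a b w : Fin d → ℝ) :
    Matrix.vecMulVec a b *ᵥ w = (b ⬝ᵥ w) • a := by
  ext i
  simp [Matrix.vecMulVec_apply, Matrix.mulVec, dotProduct, Finset.mul_sum, mul_comm,
    mul_assoc, mul_left_comm]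

lemma vecMulVec_self_posSemidef {d : ℕ} (a : Fin d → ℝ) :
    (Matrix.vecMulVec a a).PosSemidef := by
  refine Matrix.PosSemidef.of_dotProduct_mulVec_nonneg ?_ fun y => ?_
  · ext i j
    simp [Matrix.vecMulVec_apply, mul_comm]
  · have : star y ⬝ᵥ (Matrix.vecMulVec a a *ᵥ y) = (a ⬝ᵥ y) ^ 2 := by
      simp [vecMulVec_mulVec', dotProduct_smul, dotProduct_comm a y, sq]
    rw [this]
    positivity


lemma sum_mulVec'' {d : ℕ} {ι : Type*} (s : Finset ι) (M : ι → Matrix (Fin d) (Fin d) ℝ)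
    (w : Fin d → ℝ) : (∑ i ∈ s, M i) *ᵥ w = ∑ i ∈ s, M i *ᵥ w := by
  classical
  induction s using Finset.induction_on with
  | empty => simp
  | insert _ _ hni ih => simp [Finset.sum_insert hni, Matrix.add_mulVec, ih]

lemma dotProduct_sum'' {d : ℕ} {ι : Type*} (s : Finset ι) (w : Fin d → ℝ)
    (f : ι → Fin d → ℝ) : w ⬝ᵥ (∑ i ∈ s, f i) = ∑ i ∈ s, w ⬝ᵥ f i := by
  classical
  induction s using Finset.induction_on with
  | empty => simp
  | insert _ _ hni ih => simp [Finset.sum_insert hni, dotProduct_add, ih]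

lemma posSemidef_sum'' {d : ℕ} {ι : Type*} (s : Finset ι) (M : ι → Matrix (Fin d) (Fin d) ℝ)
    (h : ∀ i ∈ s, (M i).PosSemidef) : (∑ i ∈ s, M i).PosSemidef := by
  classical
  induction s using Finset.induction_on with
  | empty => simpa using Matrix.PosSemidef.zero
  | @insert a s hni ih =>
      rw [Finset.sum_insert hni]
      exact (h a (Finset.mem_insert_self a s)).add
        (ih fun i hi => h i (Finset.mem_insert_of_mem hi))

/-- With `A_t = I_d + Σ_{τ<t} x_τ x_τᵀ` and `‖x_t‖² ≤ κ²`, for each `t`,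
`Σ_{τ=1}^{t-1} |x_tᵀ A_t⁻¹ x_τ| ≤ sqrt(t · x_tᵀ A_t⁻¹ x_t)`. -/
theorem cross_term_bound (d T : ℕ) (κ : ℝ) (x : ℕ → Fin d → ℝ)
    (hx : ∀ t, 1 ≤ t → t ≤ T → ∑ i, (x t i) ^ 2 ≤ κ ^ 2)
    (A : ℕ → Matrix (Fin d) (Fin d) ℝ)
    (hA : ∀ t, A t = 1 + ∑ τ ∈ Finset.Icc 1 (t - 1), Matrix.vecMulVec (x τ) (x τ)) :
    ∀ t, 1 ≤ t → t ≤ T →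
      ∑ τ ∈ Finset.Icc 1 (t - 1), |x t ⬝ᵥ ((A t)⁻¹ *ᵥ x τ)|
        ≤ Real.sqrt (t * (x t ⬝ᵥ ((A t)⁻¹ *ᵥ x t))) := by
  intro t ht hT
  set v := x t with hv
  set B := (A t)⁻¹ with hB
  -- positive definiteness
  have hPSDsum : (∑ τ ∈ Finset.Icc 1 (t - 1), Matrix.vecMulVec (x τ) (x τ)).PosSemidef :=
    posSemidef_sum'' _ _ (fun τ _ => vecMulVec_self_posSemidef (x τ))
  have hPD : (A t).PosDef := by
    rw [hA t]
    exact Matrix.PosDef.add_posSemidef Matrix.PosDef.one hPSDsum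
  have hBPD : B.PosDef := hPD.inv
  have hBsymm : Bᵀ = B := by simpa [Matrix.conjTranspose_eq_transpose_of_trivial, Matrix.IsHermitian] using
    hBPD.isHermitian
  have hAB : A t * B = 1 := Matrix.mul_nonsing_inv _ (isUnit_iff_ne_zero.mpr hPD.det_pos.ne')
  set w := B *ᵥ v with hw
  have key : ∀ u, v ⬝ᵥ (B *ᵥ u) = w ⬝ᵥ u := by
    intro u
    rw [Matrix.dotProduct_mulVec, hw, ← Matrix.mulVec_transpose, hBsymm]
  set q := v ⬝ᵥ (B *ᵥ v) with hq
  have hq0 : 0 ≤ q := by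
    have := hBPD.posSemidef.dotProduct_mulVec_nonneg v
    simpa [hq] using this
  -- sum of squares identity and bound
  have hsq : ∑ τ ∈ Finset.Icc 1 (t - 1), (w ⬝ᵥ x τ) ^ 2 ≤ q := by
    have h1 : ∀ τ, (w ⬝ᵥ x τ) ^ 2 = w ⬝ᵥ (Matrix.vecMulVec (x τ) (x τ) *ᵥ w) := by
      intro τ
      rw [vecMulVec_mulVec']
      simp [smul_eq_mul, dotProduct_comm w (x τ), sq]
    calc ∑ τ ∈ Finset.Icc 1 (t - 1), (w ⬝ᵥ x τ) ^ 2
        = w ⬝ᵥ ((∑ τ ∈ Finset.Icc 1 (t - 1), Matrix.vecMulVec (x τ) (x τ)) *ᵥ w) := by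
          rw [sum_mulVec'', dotProduct_sum'']
          exact Finset.sum_congr rfl fun τ _ => h1 τ
      _ = w ⬝ᵥ ((A t) *ᵥ w) - w ⬝ᵥ w := by
          have : (∑ τ ∈ Finset.Icc 1 (t - 1), Matrix.vecMulVec (x τ) (x τ)) = A t - 1 := by
            rw [hA t]; abel
          rw [this, Matrix.sub_mulVec, dotProduct_sub, Matrix.one_mulVec]
      _ ≤ w ⬝ᵥ ((A t) *ᵥ w) := by
          have : (0:ℝ) ≤ w ⬝ᵥ w := Finset.sum_nonneg fun i _ => mul_self_nonneg (w i)
          linarith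
      _ = q := by
          rw [hw, Matrix.mulVec_mulVec, hAB, Matrix.one_mulVec, hq, dotProduct_comm]
  -- Cauchy-Schwarz
  set S := ∑ τ ∈ Finset.Icc 1 (t - 1), |v ⬝ᵥ (B *ᵥ x τ)| with hS
  have hS0 : 0 ≤ S := Finset.sum_nonneg fun τ _ => abs_nonneg _
  have hCS : S ^ 2 ≤ (Finset.Icc 1 (t - 1)).card * ∑ τ ∈ Finset.Icc 1 (t - 1), (w ⬝ᵥ x τ) ^ 2 := by
    have := Finset.sum_mul_sq_le_sq_mul_sq (Finset.Icc 1 (t - 1)) (fun _ => (1:ℝ))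
      (fun τ => |w ⬝ᵥ x τ|)
    simp only [one_mul, mul_one, one_pow, Finset.sum_const, nsmul_eq_mul, sq_abs] at this
    calc S ^ 2 = (∑ τ ∈ Finset.Icc 1 (t - 1), |w ⬝ᵥ x τ|) ^ 2 := by
          rw [hS]; congr 1; exact Finset.sum_congr rfl fun τ _ => by rw [key (x τ)]
      _ ≤ _ := this
  have hcard : ((Finset.Icc 1 (t - 1)).card : ℝ) ≤ (t : ℝ) := by
    rw [Nat.card_Icc]
    exact_mod_cast Nat.le_of_lt_succ (Nat.lt_succ_of_le (by omega))
  have hfinal : S ^ 2 ≤ t * q := by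
    calc S ^ 2 ≤ (Finset.Icc 1 (t - 1)).card * ∑ τ ∈ Finset.Icc 1 (t - 1), (w ⬝ᵥ x τ) ^ 2 := hCS
      _ ≤ (t : ℝ) * q := by
          apply mul_le_mul hcard hsq (Finset.sum_nonneg fun τ _ => sq_nonneg _) (by positivity)
  calc S = Real.sqrt (S ^ 2) := by rw [Real.sqrt_sq hS0]
    _ ≤ Real.sqrt (t * q) := Real.sqrt_le_sqrt hfinal
end
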